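/- Let n be a natural number, t, θ₀, θ₁ ∈ ℂ, and for n×n complex matrices q, p define H(q, p; θ₀, θ₁) = trace(p·q·(p − q − t·1) + θ₀·p − (θ₀+θ₁)·q). Then H(−p, −q; θ₀+θ₁, −θ₁) = H(q, p; θ₀, θ₁); that is, the matrix Painlevé IV Hamiltonian is invariant under the involution q ↦ −p, p ↦ −q accompanied by the parameter change θ₀ ↦ θ₀+θ₁, θ₁ ↦ −θ₁. -/
import Mathlib

/-- The matrix Painlevé IV Hamiltonian `H(q,p;θ₀,θ₁) = Tr(pq(p − q − t·1) + θ₀p − (θ₀+θ₁)q)`. -/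
noncomputable def HmatIV (n : ℕ) (t θ₀ θ₁ : ℂ) (q p : Matrix (Fin n) (Fin n) ℂ) : ℂ :=
  Matrix.trace (p * q * (p - q - t • (1 : Matrix (Fin n) (Fin n) ℂ)) + θ₀ • p - (θ₀ + θ₁) • q)

/-- The matrix Painlevé IV Hamiltonian is invariant under the involution
`q ↦ −p, p ↦ −q` with the parameter change `θ₀ ↦ θ₀+θ₁, θ₁ ↦ −θ₁`. -/
theorem matrix_painleveIV_involution_invariant (n : ℕ) (t θ₀ θ₁ : ℂ)
    (q p : Matrix (Fin n) (Fin n) ℂ) :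
    HmatIV n t (θ₀ + θ₁) (-θ₁) (-p) (-q) = HmatIV n t θ₀ θ₁ q p := by
  simp only [HmatIV, Matrix.trace_add, Matrix.trace_sub, Matrix.trace_smul, mul_sub, sub_mul,
    Matrix.trace_mul_comm (q*p) p, Matrix.trace_mul_comm (q*p) q, neg_mul, mul_neg, neg_neg,
    Matrix.trace_neg, smul_neg, smul_eq_mul, mul_one, Matrix.mul_smul, mul_assoc]
  rw [Matrix.trace_mul_comm q (p*p), Matrix.trace_mul_comm q (p*q)]
  ring_nf
  rw [show p*(q*p) = p*q*p from (mul_assoc ..).symm, show p*(q*q) = p*q*q from (mul_assoc ..).symm,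
    Matrix.trace_mul_comm (p*q) p, show p*(p*q) = p*p*q from (mul_assoc ..).symm,
    Matrix.trace_mul_comm q p]
  ring
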